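/- If u : ℝ → ℓ²(ℤ) is a C¹ solution of i u'(t) = Δu(t) + ν|u(t)|²u(t) with ν ∈ {−1,1}, then the Hamiltonian H(u) = (1/2) Σ_g |u_{g+1} − u_g|² − (ν/4) Σ_g |u_g|⁴ is conserved: H(u(t)) = H(u(0)) for all t. -/

import Mathlib

noncomputable section

/-- The Hilbert space `ℓ²(ℤ)`. -/
abbrev H : Type := lp (fun _ : ℤ => ℂ) 2

/-- The Hamiltonian of DNLS: `H(u) = (1/2) Σ_g |u_{g+1} - u_g|² - (ν/4) Σ_g |u_g|⁴`. -/
noncomputable def Ham (ν : ℝ) (v : H) : ℝ :=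
  (1 / 2) * ∑' g : ℤ, ‖(v : ℤ → ℂ) (g + 1) - (v : ℤ → ℂ) g‖ ^ 2
    - (ν / 4) * ∑' g : ℤ, ‖(v : ℤ → ℂ) g‖ ^ 4


lemma sq_summable (v : H) : Summable fun g : ℤ => ‖(v : ℤ → ℂ) g‖ ^ 2 := by
  have := (lp.memℓp v).summable (by norm_num : (0:ℝ) < (2:ENNReal).toReal)
  simpa [ENNReal.toReal_ofNat, Real.rpow_natCast] using this

lemma norm_sq_eq_tsum (v : H) : ‖v‖ ^ 2 = ∑' g : ℤ, ‖(v : ℤ → ℂ) g‖ ^ 2 := by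
  have := lp.norm_rpow_eq_tsum (by norm_num : (0:ℝ) < (2:ENNReal).toReal) v
  simp only [ENNReal.toReal_ofNat] at this
  rw [← Real.rpow_natCast ‖v‖ 2]
  simpa [Real.rpow_natCast] using this

lemma coord_le (v : H) (g : ℤ) : ‖(v : ℤ → ℂ) g‖ ≤ ‖v‖ :=
  lp.norm_apply_le_norm (by norm_num) v g

lemma shift_mem (v : H) (k : ℤ) : Memℓp (fun g : ℤ => (v : ℤ → ℂ) (g + k)) 2 := by
  apply memℓp_gen
  have : Summable fun g : ℤ => ‖(v : ℤ → ℂ) g‖ ^ ((2:ENNReal).toReal) :=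
    (lp.memℓp v).summable (by norm_num)
  have h2 : Summable ((fun g : ℤ => ‖(v : ℤ → ℂ) g‖ ^ ((2:ENNReal).toReal)) ∘ (Equiv.addRight k)) :=
    (Equiv.addRight k).summable_iff.2 this
  exact h2

lemma cube_mem (v : H) : Memℓp (fun g : ℤ => ((‖(v : ℤ → ℂ) g‖ : ℂ) ^ 2) * (v : ℤ → ℂ) g) 2 := by
  apply memℓp_gen
  simp only [ENNReal.toReal_ofNat]
  have h : Summable fun g : ℤ => ‖v‖^4 * ‖(v : ℤ → ℂ) g‖ ^ 2 := (sq_summable v).mul_left _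
  apply Summable.of_nonneg_of_le (fun g => by positivity) _ h
  intro g
  have h1 := coord_le v g
  have h0 : (0:ℝ) ≤ ‖(v : ℤ → ℂ) g‖ := norm_nonneg _
  have : ‖((‖(v : ℤ → ℂ) g‖ : ℂ) ^ 2) * (v : ℤ → ℂ) g‖ = ‖(v : ℤ → ℂ) g‖^3 := by
    rw [norm_mul, norm_pow, Complex.norm_real, Real.norm_of_nonneg h0]; ring
  rw [show (2:ℝ) = ((2:ℕ):ℝ) by norm_num, Real.rpow_natCast, this]
  calc (‖(v : ℤ → ℂ) g‖ ^ 3) ^ 2 = ‖(v : ℤ → ℂ) g‖^4 * ‖(v : ℤ → ℂ) g‖^2 := by ring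
    _ ≤ ‖v‖^4 * ‖(v : ℤ → ℂ) g‖^2 :=
        mul_le_mul_of_nonneg_right (pow_le_pow_left₀ h0 h1 4) (sq_nonneg _)

/-- right shift -/
def Sv : H ≃ₗᵢ[ℂ] H :=
{ toFun := fun v => (⟨fun g => (v : ℤ → ℂ) (g + 1), shift_mem v 1⟩ : H)
  invFun := fun v => (⟨fun g => (v : ℤ → ℂ) (g - 1), by show Memℓp (fun g => (v : ℤ → ℂ) (g - 1)) 2; simpa [sub_eq_add_neg] using shift_mem v (-1)⟩ : H)
  map_add' := fun x y => lp.ext (by funext g; simp [lp.coeFn_add, Pi.add_apply]; rfl)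
  map_smul' := fun c x => lp.ext (by funext g; simp [lp.coeFn_smul, Pi.smul_apply])
  left_inv := fun v => lp.ext (by funext g; simp)
  right_inv := fun v => lp.ext (by funext g; simp)
  norm_map' := by
    intro v
    show ‖(⟨fun g => (v : ℤ → ℂ) (g + 1), shift_mem v 1⟩ : H)‖ = ‖v‖
    have h2 : ‖(⟨fun g => (v : ℤ → ℂ) (g + 1), shift_mem v 1⟩ : H)‖^2 = ‖v‖^2 := by
      rw [norm_sq_eq_tsum, norm_sq_eq_tsum]
      exact (Equiv.addRight (1:ℤ)).tsum_eq fun g => ‖(v : ℤ → ℂ) g‖^2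
    have := norm_nonneg (⟨fun g => (v : ℤ → ℂ) (g + 1), shift_mem v 1⟩ : H)
    nlinarith [norm_nonneg v] }

@[simp] lemma Sv_apply (v : H) (g : ℤ) : ((Sv v : H) : ℤ → ℂ) g = (v : ℤ → ℂ) (g + 1) := rfl
@[simp] lemma Sv_symm_apply (v : H) (g : ℤ) : ((Sv.symm v : H) : ℤ → ℂ) g = (v : ℤ → ℂ) (g - 1) := rfl

/-- cubic nonlinearity as an element of H -/
def mE (v : H) : H := ⟨fun g => ((‖(v : ℤ → ℂ) g‖ : ℂ) ^ 2) * (v : ℤ → ℂ) g, cube_mem v⟩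

@[simp] lemma mE_apply (v : H) (g : ℤ) :
    ((mE v : H) : ℤ → ℂ) g = ((‖(v : ℤ → ℂ) g‖ : ℂ) ^ 2) * (v : ℤ → ℂ) g := rfl

open ComplexConjugate

lemma four_summable (v : H) : Summable fun g : ℤ => ‖(v : ℤ → ℂ) g‖ ^ 4 := by
  apply Summable.of_nonneg_of_le (fun g => by positivity) _ ((sq_summable v).mul_left (‖v‖^2))
  intro g
  have h1 := coord_le v g
  have h0 : (0:ℝ) ≤ ‖(v : ℤ → ℂ) g‖ := norm_nonneg _
  nlinarith [mul_le_mul_of_nonneg_right (pow_le_pow_left₀ h0 h1 2) (sq_nonneg (‖(v : ℤ → ℂ) g‖))]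

lemma mixed_summable (v h : H) :
    Summable fun g : ℤ => ‖(v : ℤ → ℂ) g‖ ^ 2 * ‖(h : ℤ → ℂ) g‖ ^ 2 := by
  apply Summable.of_nonneg_of_le (fun g => by positivity) _ ((sq_summable h).mul_left (‖v‖^2))
  intro g
  have h1 := coord_le v g
  have h0 : (0:ℝ) ≤ ‖(v : ℤ → ℂ) g‖ := norm_nonneg _
  nlinarith [mul_le_mul_of_nonneg_right (pow_le_pow_left₀ h0 h1 2) (sq_nonneg (‖(h : ℤ → ℂ) g‖))]

lemma mixed_tsum_le (v h : H) :
    ∑' g : ℤ, ‖(v : ℤ → ℂ) g‖ ^ 2 * ‖(h : ℤ → ℂ) g‖ ^ 2 ≤ ‖v‖^2 * ‖h‖^2 := by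
  have := Summable.tsum_le_tsum (f := fun g : ℤ => ‖(v : ℤ → ℂ) g‖ ^ 2 * ‖(h : ℤ → ℂ) g‖ ^ 2)
    (g := fun g : ℤ => ‖v‖^2 * ‖(h : ℤ → ℂ) g‖ ^ 2) ?_ (mixed_summable v h)
    ((sq_summable h).mul_left (‖v‖^2))
  · rw [tsum_mul_left, ← norm_sq_eq_tsum] at this; exact this
  · intro g
    have h1 := coord_le v g
    have h0 : (0:ℝ) ≤ ‖(v : ℤ → ℂ) g‖ := norm_nonneg _
    simp only []
    nlinarith [mul_le_mul_of_nonneg_right (pow_le_pow_left₀ h0 h1 2) (sq_nonneg (‖(h : ℤ → ℂ) g‖))]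

lemma key_alg (z w : ℂ) : ‖z + w‖^4 = ‖z‖^4 + 4*‖z‖^2*((conj z) * w).re
    + (2*‖z‖^2*‖w‖^2 + (2*((conj z) * w).re + ‖w‖^2)^2) := by
  have h2 : ‖z + w‖^2 = ‖z‖^2 + 2*((conj z) * w).re + ‖w‖^2 := by
    have := @norm_add_sq ℂ ℂ _ _ _ z w
    simp [RCLike.inner_apply] at this
    simp
    linarith
  calc ‖z+w‖^4 = (‖z+w‖^2)^2 := by ring
    _ = _ := by rw [h2]; ring

def Qf (v : H) : ℝ := ∑' g : ℤ, ‖(v : ℤ → ℂ) g‖ ^ 4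

lemma inner_mE (v h : H) : ((inner ℂ (mE v) h : ℂ)).re
    = ∑' g : ℤ, ‖(v : ℤ → ℂ) g‖^2 * ((conj ((v : ℤ → ℂ) g)) * ((h : ℤ → ℂ) g)).re := by
  have hs := lp.summable_inner (𝕜 := ℂ) (mE v) h
  calc ((inner ℂ (mE v) h : ℂ)).re
      = ((∑' g : ℤ, (inner ℂ (((mE v) : ℤ → ℂ) g) ((h : ℤ → ℂ) g) : ℂ))).re := by
        rw [lp.inner_eq_tsum]
    _ = ∑' g : ℤ, ((inner ℂ (((mE v) : ℤ → ℂ) g) ((h : ℤ → ℂ) g) : ℂ)).re :=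
        Complex.reCLM.map_tsum hs
    _ = _ := by
        refine tsum_congr fun g => ?_
        simp only [RCLike.inner_apply, mE_apply]
        rw [map_mul, ← Complex.ofReal_pow, Complex.conj_ofReal, mul_left_comm,
          Complex.re_ofReal_mul, mul_comm ((h : ℤ → ℂ) g)]

lemma Q_bound (v h : H) : |Qf (v + h) - Qf v - 4 * ((inner ℂ (mE v) h : ℂ)).re|
    ≤ (10 * ‖v‖^2 + 2 * ‖h‖^2) * ‖h‖^2 := by
  set z : ℤ → ℂ := (v : ℤ → ℂ) with hz
  set w : ℤ → ℂ := (h : ℤ → ℂ) with hw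
  set r : ℤ → ℝ := fun g => 2*‖z g‖^2*‖w g‖^2 + (2*((conj (z g)) * (w g)).re + ‖w g‖^2)^2
    with hrdef
  set A : ℤ → ℝ := fun g => ‖((v + h : H) : ℤ → ℂ) g‖^4 with hA
  set B : ℤ → ℝ := fun g => ‖z g‖^4 with hB
  set C : ℤ → ℝ := fun g => 4*‖z g‖^2*((conj (z g)) * (w g)).re with hC
  set maj : ℤ → ℝ := fun g => 10*(‖z g‖^2*‖w g‖^2) + 2*(‖w g‖^2*‖w g‖^2) with hmajdef
  have hr_nonneg : ∀ g, 0 ≤ r g := fun g => by positivity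
  have habs : ∀ g, |((conj (z g)) * (w g)).re| ≤ ‖z g‖ * ‖w g‖ := by
    intro g
    calc |((conj (z g)) * (w g)).re| ≤ ‖(conj (z g)) * (w g)‖ := Complex.abs_re_le_norm _
      _ = ‖z g‖ * ‖w g‖ := by rw [norm_mul, RCLike.norm_conj]
  have hmaj : ∀ g, r g ≤ maj g := by
    intro g
    obtain ⟨hl, hu⟩ := abs_le.mp (habs g)
    simp only [hrdef, hmajdef]
    nlinarith [sq_le_sq' hl hu, sq_nonneg (2*((conj (z g)) * (w g)).re - ‖w g‖^2)]
  have hw2 : Summable fun g : ℤ => ‖w g‖^2*‖w g‖^2 := by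
    refine (four_summable h).congr fun g => ?_
    ring
  have hmaj_summable : Summable maj :=
    ((mixed_summable v h).mul_left 10).add (hw2.mul_left 2)
  have hr_summable : Summable r := Summable.of_nonneg_of_le hr_nonneg hmaj hmaj_summable
  have hkey : ∀ g, A g = B g + C g + r g := by
    intro g
    have hcoe : ((v + h : H) : ℤ → ℂ) g = z g + w g := by
      rw [lp.coeFn_add]; rfl
    simp only [hA, hB, hC, hrdef, hcoe]
    have := key_alg (z g) (w g)
    linarith
  have hAs : Summable A := four_summable (v + h)
  have hBs : Summable B := four_summable v
  have hCs : Summable C := by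
    refine ((hAs.sub hBs).sub hr_summable).congr fun g => ?_
    have := hkey g
    linarith
  have hinner : 4 * ((inner ℂ (mE v) h : ℂ)).re = ∑' g, C g := by
    rw [inner_mE, ← tsum_mul_left]
    exact tsum_congr fun g => by simp only [hC]; ring
  have hQdiff : Qf (v + h) - Qf v - 4 * ((inner ℂ (mE v) h : ℂ)).re = ∑' g, r g := by
    rw [hinner]
    have h1 : Qf (v + h) = ∑' g, A g := rfl
    have h2 : Qf v = ∑' g, B g := rfl
    rw [h1, h2, ← Summable.tsum_sub hAs hBs, ← Summable.tsum_sub (hAs.sub hBs) hCs]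
    exact tsum_congr fun g => by have := hkey g; linarith
  rw [hQdiff, abs_of_nonneg (tsum_nonneg hr_nonneg)]
  calc ∑' g, r g ≤ ∑' g, maj g := Summable.tsum_le_tsum hmaj hr_summable hmaj_summable
    _ = 10 * (∑' g, ‖z g‖^2*‖w g‖^2) + 2 * (∑' g, ‖w g‖^2*‖w g‖^2) := by
        rw [hmajdef, Summable.tsum_add ((mixed_summable v h).mul_left 10) (hw2.mul_left 2),
          tsum_mul_left, tsum_mul_left]
    _ ≤ 10 * (‖v‖^2 * ‖h‖^2) + 2 * (‖h‖^2 * ‖h‖^2) := by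
        have m1 := mixed_tsum_le v h
        have m2 := mixed_tsum_le h h
        have e1 : (∑' g, ‖z g‖^2*‖w g‖^2) ≤ ‖v‖^2 * ‖h‖^2 := m1
        have e2 : (∑' g, ‖w g‖^2*‖w g‖^2) ≤ ‖h‖^2 * ‖h‖^2 := m2
        have t1 : (0:ℝ) ≤ 10 := by norm_num
        nlinarith
    _ = (10 * ‖v‖^2 + 2 * ‖h‖^2) * ‖h‖^2 := by ring

def QL (v : H) : H →L[ℝ] ℝ :=
  (4:ℝ) • (Complex.reCLM.comp ((innerSL ℂ (mE v)).restrictScalars ℝ))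

lemma QL_apply (v h : H) : QL v h = 4 * ((inner ℂ (mE v) h : ℂ)).re := rfl

lemma Qf_hasFDerivAt (v : H) : HasFDerivAt Qf (QL v) v := by
  rw [hasFDerivAt_iff_isLittleO_nhds_zero, Asymptotics.isLittleO_iff]
  intro c hc
  have hd : (0:ℝ) < 10*‖v‖^2 + 2 := by positivity
  have hδ : (0:ℝ) < min 1 (c / (10*‖v‖^2 + 2)) := lt_min one_pos (div_pos hc hd)
  filter_upwards [Metric.ball_mem_nhds (0:H) hδ] with h hh
  rw [Metric.mem_ball, dist_zero_right] at hh
  have h1 : ‖h‖ ≤ 1 := le_of_lt (lt_of_lt_of_le hh (min_le_left _ _))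
  have h2 : ‖h‖ ≤ c / (10*‖v‖^2 + 2) := le_of_lt (lt_of_lt_of_le hh (min_le_right _ _))
  have hb := Q_bound v h
  rw [QL_apply]
  have h0 : (0:ℝ) ≤ ‖h‖ := norm_nonneg _
  calc |Qf (v + h) - Qf v - 4 * ((inner ℂ (mE v) h : ℂ)).re|
      ≤ (10 * ‖v‖^2 + 2 * ‖h‖^2) * ‖h‖^2 := hb
    _ ≤ (10 * ‖v‖^2 + 2) * ‖h‖ * ‖h‖ := by
        have hx2 : ‖h‖^2 ≤ 1 := by nlinarith
        nlinarith [mul_le_mul_of_nonneg_right hx2 (sq_nonneg (‖h‖)), sq_nonneg (‖v‖)]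
    _ ≤ c * ‖h‖ := by
        have := (le_div_iff₀ hd).mp h2
        nlinarith

def DC : H →L[ℝ] H :=
  (Sv.toLinearIsometry.toContinuousLinearMap.restrictScalars ℝ) - ContinuousLinearMap.id ℝ H

lemma DC_apply (v : H) : DC v = Sv v - v := rfl

lemma ham_eq (ν : ℝ) (v : H) :
    Ham ν v = (1/2) * ((inner ℂ (DC v) (DC v) : ℂ)).re - (ν/4) * Qf v := by
  unfold Ham
  have h1 : ((inner ℂ (DC v) (DC v) : ℂ)).re = ‖DC v‖^2 := by
    rw [← @inner_self_eq_norm_sq ℂ]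
    exact RCLike.re_to_complex.symm
  have h2 : ‖DC v‖^2 = ∑' g : ℤ, ‖(v : ℤ → ℂ) (g + 1) - (v : ℤ → ℂ) g‖ ^ 2 := by
    rw [norm_sq_eq_tsum]
    refine tsum_congr fun g => ?_
    rw [DC_apply, lp.coeFn_sub, Pi.sub_apply, Sv_apply]
  rw [h1, h2]
  rfl

/-- A `C¹` solution of the DNLS equation `i u' = Δu + ν|u|²u` conserves the Hamiltonian. -/
theorem DNLS_energy_conservation (ν : ℝ) (hν : ν = 1 ∨ ν = -1)
    (u u' : ℝ → H) (hu' : Continuous u') (hderiv : ∀ t, HasDerivAt u (u' t) t)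
    (heq : ∀ (t : ℝ) (g : ℤ),
      Complex.I * (u' t : ℤ → ℂ) g =
        ((u t : ℤ → ℂ) (g + 1) - 2 * (u t : ℤ → ℂ) g + (u t : ℤ → ℂ) (g - 1)) +
          ν * (‖(u t : ℤ → ℂ) g‖ : ℂ) ^ 2 * (u t : ℤ → ℂ) g) :
    ∀ t : ℝ, Ham ν (u t) = Ham ν (u 0) := by
  have key : ∀ t : ℝ, HasDerivAt (fun s => Ham ν (u s)) 0 t := by
    intro t
    have hDu : HasDerivAt (fun s => DC (u s)) (DC (u' t)) t :=
      DC.hasFDerivAt.comp_hasDerivAt t (hderiv t)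
    have hinner : HasDerivAt (fun s => (inner ℂ (DC (u s)) (DC (u s)) : ℂ))
        ((inner ℂ (DC (u t)) (DC (u' t)) : ℂ) + (inner ℂ (DC (u' t)) (DC (u t)) : ℂ)) t :=
      HasDerivAt.inner ℂ hDu hDu
    have hre : HasDerivAt (fun s => ((inner ℂ (DC (u s)) (DC (u s)) : ℂ)).re)
        (((inner ℂ (DC (u t)) (DC (u' t)) : ℂ) + (inner ℂ (DC (u' t)) (DC (u t)) : ℂ)).re) t :=
      Complex.reCLM.hasFDerivAt.comp_hasDerivAt t hinner
    have hQ : HasDerivAt (fun s => Qf (u s)) (QL (u t) (u' t)) t :=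
      (Qf_hasFDerivAt (u t)).comp_hasDerivAt t (hderiv t)
    have hE : HasDerivAt (fun s => Ham ν (u s))
        ((1/2) * (((inner ℂ (DC (u t)) (DC (u' t)) : ℂ)
            + (inner ℂ (DC (u' t)) (DC (u t)) : ℂ)).re)
          - (ν/4) * (QL (u t) (u' t))) t := by
      have h0 := (hre.const_mul (1/2 : ℝ)).sub (hQ.const_mul (ν/4))
      have hfun : (fun s => Ham ν (u s))
          = (fun s => (1/2) * ((inner ℂ (DC (u s)) (DC (u s)) : ℂ)).re - (ν/4) * Qf (u s)) :=
        funext fun s => ham_eq ν (u s)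
      rw [hfun]
      exact h0
    suffices hzero : (1/2) * (((inner ℂ (DC (u t)) (DC (u' t)) : ℂ)
            + (inner ℂ (DC (u' t)) (DC (u t)) : ℂ)).re)
          - (ν/4) * (QL (u t) (u' t)) = 0 by
      rw [hzero] at hE; exact hE
    set a : ℂ := (inner ℂ (DC (u t)) (DC (u' t)) : ℂ) with ha
    have hb : (inner ℂ (DC (u' t)) (DC (u t)) : ℂ) = conj a := by
      rw [ha, ← inner_conj_symm]
    have h1 : (inner ℂ (Sv (u t)) (Sv (u' t)) : ℂ) = inner ℂ (u t) (u' t) :=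
      Sv.inner_map_map (u t) (u' t)
    have h2 : (inner ℂ (u t) (Sv (u' t)) : ℂ) = inner ℂ (Sv.symm (u t)) (u' t) := by
      conv_lhs => rw [← Sv.apply_symm_apply (u t)]
      exact Sv.inner_map_map _ _
    set Y : H := u t + u t - Sv (u t) - Sv.symm (u t) - (ν:ℂ) • mE (u t) with hYdef
    have hY : Y = (-Complex.I) • u' t := by
      apply lp.ext
      funext g
      simp only [hYdef, lp.coeFn_sub, lp.coeFn_add, lp.coeFn_smul, Pi.sub_apply,
        Pi.add_apply, Pi.smul_apply, Sv_apply, Sv_symm_apply, mE_apply, smul_eq_mul]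
      linear_combination heq t g
    have hX : (inner ℂ Y (u' t) : ℂ) = a - (ν:ℂ) * (inner ℂ (mE (u t)) (u' t) : ℂ) := by
      simp only [hYdef, ha, DC_apply, inner_sub_left, inner_add_left, inner_smul_left,
        inner_sub_right, h1, h2, Complex.conj_ofReal]
      ring
    have hXval : (inner ℂ Y (u' t) : ℂ) = Complex.I * (inner ℂ (u' t) (u' t) : ℂ) := by
      rw [hY, inner_smul_left]
      congr 1
      simp
    have him : ((inner ℂ (u' t) (u' t) : ℂ)).im = 0 := by
      have h := inner_self_im (𝕜 := ℂ) (u' t)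
      rwa [RCLike.im_to_complex] at h
    have hfinal : (a - (ν:ℂ) * (inner ℂ (mE (u t)) (u' t) : ℂ)).re = 0 := by
      rw [← hX, hXval]
      simp [Complex.mul_re, him]
      exact_mod_cast Complex.ofReal_im (‖u' t‖ ^ 2)
    rw [QL_apply, hb]
    have hre2 : (a + conj a).re = 2 * a.re := by
      simp [Complex.add_re]
      ring
    rw [hre2]
    have : a.re - ν * ((inner ℂ (mE (u t)) (u' t) : ℂ)).re = 0 := by
      have := hfinal
      rw [Complex.sub_re, Complex.re_ofReal_mul] at this
      linarith
    linarith
  intro t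
  exact is_const_of_deriv_eq_zero (fun s => (key s).differentiableAt)
    (fun s => (key s).deriv) t 0
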